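/- Let R be a reduced irreducible root system with Λ = 2 (or simply laced), highest root θ, L = ht_l(θ), S = ht_s(θ). The positive short roots α with (α, θ∨) > 0 are exactly S in number, and for each m = 1,…,S there is a unique positive short root β_m with (β_m, θ∨) > 0 and ht(β_m) = (L−1)/2 + m. -/
import Mathlib


open scoped RealInnerProductSpace Classical

noncomputable section

variable {E : Type*} [NormedAddCommGroup E] [InnerProductSpace ℝ E]

/-- A reduced irreducible root system in a Euclidean space. -/
structure RRS (E : Type*) [NormedAddCommGroup E] [InnerProductSpace ℝ E] : Type _ where
  roots : Finset E
  nonempty : roots.Nonempty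
  span_eq : Submodule.span ℝ (roots : Set E) = ⊤
  ne_zero : ∀ α ∈ roots, α ≠ 0
  reflect_mem : ∀ α ∈ roots, ∀ β ∈ roots, β - (2 * ⟪β, α⟫ / ⟪α, α⟫) • α ∈ roots
  pairing_int : ∀ α ∈ roots, ∀ β ∈ roots, ∃ n : ℤ, 2 * ⟪β, α⟫ / ⟪α, α⟫ = (n : ℝ)
  reduced : ∀ α ∈ roots, ∀ c : ℝ, c • α ∈ roots → c = 1 ∨ c = -1
  irreducible : ∀ s : Finset E, s ⊆ roots → s.Nonempty →
      (∀ α ∈ s, ∀ β ∈ roots, β ∉ s → ⟪α, β⟫ = 0) → s = roots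

/-- The Cartan pairing `⟨β, α∨⟩ = 2(β,α)/(α,α)`. -/
def pairR (β α : E) : ℝ := 2 * ⟪β, α⟫ / ⟪α, α⟫

/-- The orthogonal reflection in (the hyperplane orthogonal to) `α`. -/
def reflMap (α x : E) : E := x - pairR x α • α

/-- `Δ` is a base of simple roots, with `coeff α γ` the coordinates of roots. -/
def IsBase (R : RRS E) (Δ : Finset E) (coeff : E → E → ℤ) : Prop :=
  Δ ⊆ R.roots ∧ LinearIndependent ℝ (fun γ : (Δ : Set E) => (γ : E)) ∧
    (∀ α ∈ R.roots, α = ∑ γ ∈ Δ, (coeff α γ : ℝ) • γ) ∧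
    (∀ α ∈ R.roots, (∀ γ ∈ Δ, 0 ≤ coeff α γ) ∨ (∀ γ ∈ Δ, coeff α γ ≤ 0))

/-- Positivity (all simple-root coordinates nonnegative). -/
def IsPos (Δ : Finset E) (coeff : E → E → ℤ) (α : E) : Prop := ∀ γ ∈ Δ, 0 ≤ coeff α γ

/-- Height: the sum of the simple-root coordinates. -/
def htZ (Δ : Finset E) (coeff : E → E → ℤ) (α : E) : ℤ := ∑ γ ∈ Δ, coeff α γ

/-- Partial height: the sum of coordinates over simple roots satisfying `P`. -/
def htP (Δ : Finset E) (coeff : E → E → ℤ) (P : E → Prop) (α : E) : ℤ :=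
  ∑ γ ∈ Δ.filter P, coeff α γ

/-- The result of applying the word of reflections `s_{γ_p} ⋯ s_{γ_1}` to `x`,
where `l = [γ_1, …, γ_p]`. -/
def wordMap (l : List E) (x : E) : E := l.foldl (fun y γ => reflMap γ y) x

/-- The chain of roots `α^(i) = s_{γ_1} ⋯ s_{γ_{i-1}} γ_i` (0-based `i`). -/
def chainRoot (l : List E) (i : ℕ) : E := wordMap ((l.take i).reverse) (l.getD i 0)


namespace Stmt10Aux

structure Ctx (E : Type*) [NormedAddCommGroup E] [InnerProductSpace ℝ E] : Type _ where
  R : RRS E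
  Δ : Finset E
  coeff : E → E → ℤ
  hB : IsBase R Δ coeff
  a : ℝ
  ha : 0 < a
  hlen : ∀ α ∈ R.roots, ⟪α, α⟫ = a ∨ ⟪α, α⟫ = 2 * a
  θ : E
  hθmem : θ ∈ R.roots
  hθhigh : ∀ α ∈ R.roots, ∀ γ ∈ Δ, coeff α γ ≤ coeff θ γ
  hθlong : ⟪θ, θ⟫ = 2 * a

namespace Ctx

variable {E : Type*} [NormedAddCommGroup E] [InnerProductSpace ℝ E] (c : Ctx E)

lemma ipos {α : E} (h : α ∈ c.R.roots) : 0 < ⟪α, α⟫ :=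
  lt_of_le_of_ne real_inner_self_nonneg
    (fun h0 => (c.R.ne_zero α h) (inner_self_eq_zero.1 h0.symm))

lemma cs_sq (x y : E) : ⟪x, y⟫ ^ 2 ≤ ⟪x, x⟫ * ⟪y, y⟫ := by
  have := real_inner_mul_inner_self_le x y; nlinarith

lemma neg_mem {α : E} (h : α ∈ c.R.roots) : -α ∈ c.R.roots := by
  have h2 := c.R.reflect_mem α h α h
  have hα : ⟪α, α⟫ ≠ 0 := ne_of_gt (c.ipos h)
  rw [show 2 * ⟪α, α⟫ / ⟪α, α⟫ = (2:ℝ) from by field_simp] at h2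
  rw [show α - (2:ℝ) • α = -α from by rw [two_smul]; abel] at h2
  exact h2

lemma repr {α : E} (h : α ∈ c.R.roots) : α = ∑ γ ∈ c.Δ, (c.coeff α γ : ℝ) • γ :=
  c.hB.2.2.1 α h

lemma sum_coeff_zero {g : E → ℝ} (h : ∑ γ ∈ c.Δ, g γ • γ = 0) : ∀ γ ∈ c.Δ, g γ = 0 := by
  have hLI := c.hB.2.1
  rw [linearIndependent_iff'] at hLI
  intro γ hγ
  have h2 : ∑ i ∈ c.Δ.attach, g (i : E) • (i : E) = 0 := by
    rw [Finset.sum_attach c.Δ (fun x => g x • x)]; exact h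
  exact hLI c.Δ.attach (fun i => g (i : E)) h2 ⟨γ, hγ⟩ (Finset.mem_attach _ _)

lemma coeff_eq {v : E} (hv : v ∈ c.R.roots) (x : E → ℤ)
    (hx : v = ∑ γ ∈ c.Δ, (x γ : ℝ) • γ) : ∀ γ ∈ c.Δ, c.coeff v γ = x γ := by
  intro γ hγ
  have h1 : ∑ γ ∈ c.Δ, (c.coeff v γ : ℝ) • γ = ∑ γ ∈ c.Δ, (x γ : ℝ) • γ :=
    (c.repr hv).symm.trans hx
  have h0 : ∑ γ ∈ c.Δ, ((c.coeff v γ : ℝ) - (x γ : ℝ)) • γ = 0 := by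
    simp only [sub_smul]
    rw [Finset.sum_sub_distrib, h1, sub_self]
  have h3 := c.sum_coeff_zero h0 γ hγ
  have h4 : (c.coeff v γ : ℝ) = (x γ : ℝ) := by linarith
  exact_mod_cast h4

lemma simple_mem {γ : E} (h : γ ∈ c.Δ) : γ ∈ c.R.roots := c.hB.1 h

lemma smul_simple_repr {γ : E} (hγ : γ ∈ c.Δ) (q : ℤ) :
    (q : ℝ) • γ = ∑ γ' ∈ c.Δ, ((if γ' = γ then q else 0 : ℤ) : ℝ) • γ' := by
  symm
  calc ∑ γ' ∈ c.Δ, ((if γ' = γ then q else 0 : ℤ) : ℝ) • γ'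
      = ∑ γ' ∈ c.Δ, (if γ' = γ then (q : ℝ) • γ' else 0) :=
        Finset.sum_congr rfl (fun γ' _ => by split <;> simp)
    _ = (q : ℝ) • γ := by
        rw [Finset.sum_ite_eq' c.Δ γ (fun x => (q : ℝ) • x), if_pos hγ]

lemma coeff_simple {γ : E} (h : γ ∈ c.Δ) :
    ∀ γ' ∈ c.Δ, c.coeff γ γ' = if γ' = γ then 1 else 0 := by
  apply c.coeff_eq (c.simple_mem h)
  have := c.smul_simple_repr h 1
  simpa using this

lemma sign_dichotomy {α : E} (h : α ∈ c.R.roots) :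
    (∀ γ ∈ c.Δ, 0 ≤ c.coeff α γ) ∨ (∀ γ ∈ c.Δ, c.coeff α γ ≤ 0) := c.hB.2.2.2 α h

lemma exists_coeff_ne {α : E} (h : α ∈ c.R.roots) : ∃ γ ∈ c.Δ, c.coeff α γ ≠ 0 := by
  by_contra hc
  push_neg at hc
  apply c.R.ne_zero α h
  rw [c.repr h]
  exact Finset.sum_eq_zero fun γ hγ => by rw [hc γ hγ]; simp

lemma htZ_pos_of_isPos {α : E} (h : α ∈ c.R.roots) (hp : IsPos c.Δ c.coeff α) :
    0 < htZ c.Δ c.coeff α := by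
  obtain ⟨γ, hγ, hne⟩ := c.exists_coeff_ne h
  exact Finset.sum_pos' (fun γ' hγ' => hp γ' hγ')
    ⟨γ, hγ, lt_of_le_of_ne (hp γ hγ) (Ne.symm hne)⟩

lemma isPos_iff {α : E} (h : α ∈ c.R.roots) :
    IsPos c.Δ c.coeff α ↔ 0 < htZ c.Δ c.coeff α := by
  constructor
  · exact c.htZ_pos_of_isPos h
  · intro hht
    rcases c.sign_dichotomy h with hp | hn
    · exact hp
    · exfalso
      have : htZ c.Δ c.coeff α ≤ 0 := Finset.sum_nonpos hn
      omega

lemma coeff_neg {α : E} (h : α ∈ c.R.roots) :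
    ∀ γ ∈ c.Δ, c.coeff (-α) γ = - c.coeff α γ := by
  apply c.coeff_eq (c.neg_mem h)
  conv_lhs => rw [c.repr h]
  rw [← Finset.sum_neg_distrib]
  exact Finset.sum_congr rfl fun γ _ => by push_cast; rw [neg_smul]

lemma htZ_neg {α : E} (h : α ∈ c.R.roots) :
    htZ c.Δ c.coeff (-α) = - htZ c.Δ c.coeff α := by
  unfold htZ
  rw [← Finset.sum_neg_distrib]
  exact Finset.sum_congr rfl fun γ hγ => c.coeff_neg h γ hγ

lemma htZ_ne_zero {α : E} (h : α ∈ c.R.roots) : htZ c.Δ c.coeff α ≠ 0 := by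
  rcases c.sign_dichotomy h with hp | hn
  · exact ne_of_gt (c.htZ_pos_of_isPos h hp)
  · have hpos : IsPos c.Δ c.coeff (-α) := by
      intro γ hγ
      rw [c.coeff_neg h γ hγ]
      have := hn γ hγ; omega
    have h1 := c.htZ_pos_of_isPos (c.neg_mem h) hpos
    have h2 := c.htZ_neg h
    omega

lemma isPos_of_coeff_pos {α γ0 : E} (h : α ∈ c.R.roots) (hγ0 : γ0 ∈ c.Δ)
    (hc : 0 < c.coeff α γ0) : IsPos c.Δ c.coeff α := by
  rcases c.sign_dichotomy h with hp | hn
  · exact hp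
  · exfalso; have := hn γ0 hγ0; omega

lemma coeff_add {α β : E} (hα : α ∈ c.R.roots) (hβ : β ∈ c.R.roots)
    (hs : α + β ∈ c.R.roots) :
    ∀ γ ∈ c.Δ, c.coeff (α + β) γ = c.coeff α γ + c.coeff β γ := by
  apply c.coeff_eq hs
  conv_lhs => rw [c.repr hα, c.repr hβ]
  rw [← Finset.sum_add_distrib]
  exact Finset.sum_congr rfl fun γ _ => by push_cast; rw [add_smul]

lemma coeff_sub {α β : E} (hα : α ∈ c.R.roots) (hβ : β ∈ c.R.roots)
    (hs : α - β ∈ c.R.roots) :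
    ∀ γ ∈ c.Δ, c.coeff (α - β) γ = c.coeff α γ - c.coeff β γ := by
  apply c.coeff_eq hs
  conv_lhs => rw [c.repr hα, c.repr hβ]
  rw [← Finset.sum_sub_distrib]
  exact Finset.sum_congr rfl fun γ _ => by push_cast; rw [sub_smul]

lemma htZ_add {α β : E} (hα : α ∈ c.R.roots) (hβ : β ∈ c.R.roots)
    (hs : α + β ∈ c.R.roots) :
    htZ c.Δ c.coeff (α + β) = htZ c.Δ c.coeff α + htZ c.Δ c.coeff β := by
  unfold htZ
  rw [Finset.sum_congr rfl (c.coeff_add hα hβ hs), Finset.sum_add_distrib]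

lemma htZ_sub {α β : E} (hα : α ∈ c.R.roots) (hβ : β ∈ c.R.roots)
    (hs : α - β ∈ c.R.roots) :
    htZ c.Δ c.coeff (α - β) = htZ c.Δ c.coeff α - htZ c.Δ c.coeff β := by
  unfold htZ
  rw [Finset.sum_congr rfl (c.coeff_sub hα hβ hs), Finset.sum_sub_distrib]

lemma htZ_simple {γ : E} (h : γ ∈ c.Δ) : htZ c.Δ c.coeff γ = 1 := by
  unfold htZ
  rw [Finset.sum_congr rfl (c.coeff_simple h),
    Finset.sum_ite_eq' c.Δ γ (fun _ => (1:ℤ)), if_pos h]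

lemma simple_isPos {γ : E} (h : γ ∈ c.Δ) : IsPos c.Δ c.coeff γ := by
  intro γ' hγ'
  rw [c.coeff_simple h γ' hγ']
  split <;> omega

lemma key {x y : E} (hx : x ∈ c.R.roots) (hy : y ∈ c.R.roots) (hxy : 0 < ⟪x, y⟫)
    (hne : x ≠ y) (hle : ⟪x, x⟫ ≤ ⟪y, y⟫) :
    x - y ∈ c.R.roots ∧ ⟪x - y, x - y⟫ = ⟪x, x⟫ := by
  have hxx := c.ipos hx
  have hyy := c.ipos hy
  have hpar : ∀ t : ℝ, x ≠ t • y := by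
    intro t ht
    rcases c.R.reduced y hy t (ht ▸ hx) with rfl | rfl
    · rw [one_smul] at ht; exact hne ht
    · rw [ht, neg_smul, one_smul, inner_neg_left] at hxy; linarith
  have hcs : ⟪x, y⟫ ^ 2 < ⟪x, x⟫ * ⟪y, y⟫ := by
    rcases eq_or_lt_of_le (cs_sq x y) with heq | hlt
    · exfalso
      have hz : ⟪(⟪y, y⟫ : ℝ) • x - (⟪x, y⟫ : ℝ) • y, (⟪y, y⟫ : ℝ) • x - (⟪x, y⟫ : ℝ) • y⟫ = 0 := by
        simp only [inner_sub_left, inner_sub_right, real_inner_smul_left, real_inner_smul_right]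
        rw [real_inner_comm x y]
        nlinarith [heq]
      have hz0 : (⟪y, y⟫ : ℝ) • x = (⟪x, y⟫ : ℝ) • y := by
        rwa [inner_self_eq_zero, sub_eq_zero] at hz
      apply hpar (⟪y, y⟫⁻¹ * ⟪x, y⟫)
      rw [mul_smul, ← hz0, smul_smul, inv_mul_cancel₀ (ne_of_gt hyy), one_smul]
    · exact hlt
  obtain ⟨q, hq⟩ := c.R.pairing_int y hy x hx
  obtain ⟨p, hp⟩ := c.R.pairing_int x hx y hy
  have hq' : 2 * ⟪x, y⟫ = (q : ℝ) * ⟪y, y⟫ := by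
    rw [div_eq_iff (ne_of_gt hyy)] at hq; linarith
  have hp' : 2 * ⟪x, y⟫ = (p : ℝ) * ⟪x, x⟫ := by
    rw [div_eq_iff (ne_of_gt hxx), real_inner_comm x y] at hp; linarith
  have hq1 : 1 ≤ q := by
    have h1 : 0 < (q : ℝ) := by nlinarith
    have h2 : 0 < q := by exact_mod_cast h1
    omega
  have hp1 : 1 ≤ p := by
    have h1 : 0 < (p : ℝ) := by nlinarith
    have h2 : 0 < p := by exact_mod_cast h1
    omega
  have hqp : (q : ℝ) ≤ (p : ℝ) := by
    have h1 : (1 : ℝ) ≤ (p : ℝ) := by exact_mod_cast hp1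
    nlinarith
  have hprod : ((q : ℝ) * p) * (⟪x, x⟫ * ⟪y, y⟫) = (2 * ⟪x, y⟫) * (2 * ⟪x, y⟫) := by
    linear_combination (-(p : ℝ) * ⟪x, x⟫) * hq' + (-(2 * ⟪x, y⟫)) * hp'
  have hq4 : (q : ℝ) * (p : ℝ) < 4 := by
    have hX : 0 < ⟪x, x⟫ * ⟪y, y⟫ := mul_pos hxx hyy
    nlinarith [hprod, hcs]
  have hqone : q = 1 := by
    have h1 : (1 : ℝ) ≤ (q : ℝ) := by exact_mod_cast hq1
    have h2 : (q : ℝ) * (q : ℝ) < 4 := by nlinarith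
    have h3 : (q : ℝ) < 2 := by nlinarith
    have h4 : q < 2 := by exact_mod_cast h3
    omega
  have hmem := c.R.reflect_mem y hy x hx
  rw [hq, hqone] at hmem
  rw [Int.cast_one, one_smul] at hmem
  refine ⟨hmem, ?_⟩
  have h2 : 2 * ⟪x, y⟫ = ⟪y, y⟫ := by rw [hq', hqone]; simp
  simp only [inner_sub_left, inner_sub_right]
  rw [real_inner_comm x y]
  linarith

lemma coeff_theta_ge_one {γ : E} (hγ : γ ∈ c.Δ) : 1 ≤ c.coeff c.θ γ := by
  have h1 := c.hθhigh γ (c.simple_mem hγ) γ hγ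
  have h2 := c.coeff_simple hγ γ hγ
  rw [if_pos rfl] at h2
  omega

lemma theta_isPos : IsPos c.Δ c.coeff c.θ := fun γ hγ => by
  have := c.coeff_theta_ge_one hγ; omega

lemma short_le {α : E} (h : α ∈ c.R.roots) : c.a ≤ ⟪α, α⟫ := by
  rcases c.hlen α h with h' | h' <;> rw [h'] <;> linarith [c.ha]

lemma inner_theta_nonneg {α : E} (h : α ∈ c.R.roots) (hp : IsPos c.Δ c.coeff α) :
    0 ≤ ⟪α, c.θ⟫ := by
  by_contra hc
  push_neg at hc
  have h1 : 0 < ⟪-α, c.θ⟫ := by rw [inner_neg_left]; linarith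
  have hne : -α ≠ c.θ := by
    intro he
    have h2 := c.htZ_pos_of_isPos c.hθmem c.theta_isPos
    have h3 := c.htZ_pos_of_isPos h hp
    have h4 := c.htZ_neg h
    rw [he] at h4
    omega
  have hle : ⟪-α, -α⟫ ≤ ⟪c.θ, c.θ⟫ := by
    rw [inner_neg_neg, c.hθlong]
    rcases c.hlen α h with h' | h' <;> rw [h'] <;> linarith [c.ha]
  obtain ⟨hmem, -⟩ := c.key (c.neg_mem h) c.hθmem h1 hne hle
  have hmem2 : α + c.θ ∈ c.R.roots := by
    rw [show α + c.θ = -(-α - c.θ) from by abel]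
    exact c.neg_mem hmem
  have hcz : ∀ γ ∈ c.Δ, c.coeff α γ = 0 := by
    intro γ hγ
    have h3 := c.coeff_add h c.hθmem hmem2 γ hγ
    have h4 := c.hθhigh (α + c.θ) hmem2 γ hγ
    have h5 := hp γ hγ
    omega
  apply c.R.ne_zero α h
  rw [c.repr h]
  exact Finset.sum_eq_zero fun γ hγ => by rw [hcz γ hγ]; simp

lemma inner_theta_short {α : E} (h : α ∈ c.R.roots) (hp : IsPos c.Δ c.coeff α)
    (hs : ⟪α, α⟫ = c.a) : ⟪α, c.θ⟫ = 0 ∨ ⟪α, c.θ⟫ = c.a := by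
  obtain ⟨n, hn⟩ := c.R.pairing_int c.θ c.hθmem α h
  rw [c.hθlong] at hn
  have ha := c.ha
  have h2a : 2 * c.a ≠ 0 := by linarith
  rw [div_eq_iff h2a] at hn
  have hn' : ⟪α, c.θ⟫ = (n : ℝ) * c.a := by linarith
  have hnn : 0 ≤ n := by
    have h0 := c.inner_theta_nonneg h hp
    rw [hn'] at h0
    by_contra hcon
    push_neg at hcon
    have h6 : n ≤ -1 := by omega
    have : (n : ℝ) ≤ -1 := by exact_mod_cast h6
    nlinarith
  have hcs := cs_sq α c.θ
  rw [hs, c.hθlong, hn'] at hcs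
  have hn2 : n ≤ 1 := by
    by_contra hcon
    push_neg at hcon
    have h7 : (2 : ℝ) ≤ (n : ℝ) := by exact_mod_cast hcon
    have h4 : (4 : ℝ) ≤ (n : ℝ) * (n : ℝ) := by nlinarith [h7]
    nlinarith [hcs, h4, ha, mul_pos ha ha]
  interval_cases n
  · left; rw [hn']; simp
  · right; rw [hn']; simp

def TS : Finset E :=
  c.R.roots.filter (fun α => IsPos c.Δ c.coeff α ∧ ⟪α, α⟫ = c.a ∧ 0 < ⟪α, c.θ⟫)

lemma mem_TS {α : E} :
    α ∈ c.TS ↔ α ∈ c.R.roots ∧ IsPos c.Δ c.coeff α ∧ ⟪α, α⟫ = c.a ∧ 0 < ⟪α, c.θ⟫ := by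
  unfold TS
  exact Finset.mem_filter

lemma TS_inner_theta {α : E} (h : α ∈ c.TS) : ⟪α, c.θ⟫ = c.a := by
  obtain ⟨hr, hp, hs, hpos⟩ := c.mem_TS.1 h
  rcases c.inner_theta_short hr hp hs with h0 | h0
  · linarith
  · exact h0

lemma theta_sub {α : E} (h : α ∈ c.TS) :
    c.θ - α ∈ c.TS ∧ ∀ γ ∈ c.Δ, c.coeff (c.θ - α) γ = c.coeff c.θ γ - c.coeff α γ := by
  obtain ⟨hr, hp, hs, hpos⟩ := c.mem_TS.1 h
  have hia := c.TS_inner_theta h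
  have hne : α ≠ c.θ := fun he => by rw [he, c.hθlong] at hs; linarith [c.ha]
  have hle : ⟪α, α⟫ ≤ ⟪c.θ, c.θ⟫ := by rw [hs, c.hθlong]; linarith [c.ha]
  obtain ⟨hm, hnorm⟩ := c.key hr c.hθmem (by rw [hia]; exact c.ha) hne hle
  have hm2 : c.θ - α ∈ c.R.roots := by
    have := c.neg_mem hm
    rwa [neg_sub] at this
  have hco := c.coeff_sub c.hθmem hr hm2
  refine ⟨c.mem_TS.2 ⟨hm2, ?_, ?_, ?_⟩, hco⟩
  · intro γ hγ
    rw [hco γ hγ]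
    have := c.hθhigh α hr γ hγ
    omega
  · rw [show c.θ - α = -(α - c.θ) from (neg_sub α c.θ).symm, inner_neg_neg, hnorm, hs]
  · rw [inner_sub_left, c.hθlong, hia]
    linarith [c.ha]

lemma TS_dichotomy {α β : E} (hα : α ∈ c.TS) (hβ : β ∈ c.TS) :
    0 < ⟪α, β⟫ ∨ α + β = c.θ := by
  by_cases hip : 0 < ⟪α, β⟫
  · exact Or.inl hip
  push_neg at hip
  right
  have h1 := c.TS_inner_theta hα
  have h2 := c.TS_inner_theta hβ
  obtain ⟨-, -, hsα, -⟩ := c.mem_TS.1 hα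
  obtain ⟨-, -, hsβ, -⟩ := c.mem_TS.1 hβ
  have hv : ⟪α + β - c.θ, α + β - c.θ⟫ = 2 * ⟪α, β⟫ := by
    simp only [inner_sub_left, inner_sub_right, inner_add_left, inner_add_right]
    rw [real_inner_comm α β, real_inner_comm α c.θ, real_inner_comm β c.θ]
    rw [hsα, hsβ, c.hθlong, h1, h2]
    ring
  have hnn : 0 ≤ ⟪α + β - c.θ, α + β - c.θ⟫ := real_inner_self_nonneg
  have hz : ⟪α + β - c.θ, α + β - c.θ⟫ = 0 := by linarith
  have := inner_self_eq_zero.1 hz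
  exact sub_eq_zero.1 this

lemma ht_inj {α β : E} (hα : α ∈ c.TS) (hβ : β ∈ c.TS)
    (h : htZ c.Δ c.coeff α = htZ c.Δ c.coeff β) : α = β := by
  by_contra hne
  obtain ⟨hrα, hpα, hsα, -⟩ := c.mem_TS.1 hα
  obtain ⟨hrβ, hpβ, hsβ, -⟩ := c.mem_TS.1 hβ
  rcases c.TS_dichotomy hα hβ with hip | hsum
  · have hip' : 0 < ⟪β, α⟫ := by rwa [real_inner_comm α β]
    obtain ⟨hm, -⟩ := c.key hrβ hrα hip' (fun he => hne he.symm) (by rw [hsα, hsβ])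
    have hhz := c.htZ_sub hrβ hrα hm
    have := c.htZ_ne_zero hm
    omega
  · have hroot := c.R.reflect_mem α hrα c.θ c.hθmem
    have hia := c.TS_inner_theta hα
    have hsc : 2 * ⟪c.θ, α⟫ / ⟪α, α⟫ = (2 : ℝ) := by
      rw [real_inner_comm α c.θ, hia, hsα]
      have := c.ha
      field_simp
    rw [hsc] at hroot
    have hba : c.θ - (2 : ℝ) • α = β - α := by
      rw [← hsum, two_smul]; abel
    rw [hba] at hroot
    have hhz := c.htZ_sub hrβ hrα hroot
    have := c.htZ_ne_zero hroot
    omega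

lemma up_step {α γ : E} (hα : α ∈ c.TS) (hγ : γ ∈ c.Δ) (hγθ : ⟪γ, c.θ⟫ = 0)
    (hneg : ⟪α, γ⟫ < 0) :
    α + γ ∈ c.TS ∧ htZ c.Δ c.coeff (α + γ) = htZ c.Δ c.coeff α + 1 := by
  obtain ⟨hrα, hpα, hsα, -⟩ := c.mem_TS.1 hα
  have hrγ := c.simple_mem hγ
  have hip : 0 < ⟪-α, γ⟫ := by rw [inner_neg_left]; linarith
  have hne : -α ≠ γ := by
    intro he
    have h1 := c.TS_inner_theta hα
    have h2 : ⟪-α, c.θ⟫ = 0 := by rw [he]; exact hγθ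
    rw [inner_neg_left] at h2
    linarith [c.ha]
  have hle : ⟪-α, -α⟫ ≤ ⟪γ, γ⟫ := by rw [inner_neg_neg, hsα]; exact c.short_le hrγ
  obtain ⟨hm, hnorm⟩ := c.key (c.neg_mem hrα) hrγ hip hne hle
  have hm2 : α + γ ∈ c.R.roots := by
    rw [show α + γ = -(-α - γ) from by abel]
    exact c.neg_mem hm
  have hnorm2 : ⟪α + γ, α + γ⟫ = c.a := by
    rw [show α + γ = -(-α - γ) from by abel, inner_neg_neg, hnorm, inner_neg_neg, hsα]
  have hcoeff := c.coeff_add hrα hrγ hm2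
  have hp2 : IsPos c.Δ c.coeff (α + γ) := by
    apply c.isPos_of_coeff_pos hm2 hγ
    rw [hcoeff γ hγ, c.coeff_simple hγ γ hγ, if_pos rfl]
    have := hpα γ hγ
    omega
  refine ⟨c.mem_TS.2 ⟨hm2, hp2, hnorm2, ?_⟩, ?_⟩
  · rw [inner_add_left, c.TS_inner_theta hα, hγθ]
    linarith [c.ha]
  · rw [c.htZ_add hrα hrγ hm2, c.htZ_simple hγ]

lemma down_step {β γ : E} (hβ : β ∈ c.TS) (hγ : γ ∈ c.Δ) (hγθ : ⟪γ, c.θ⟫ = 0)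
    (hpos : 0 < ⟪β, γ⟫) :
    β - γ ∈ c.TS ∧ htZ c.Δ c.coeff (β - γ) = htZ c.Δ c.coeff β - 1 := by
  obtain ⟨hrβ, hpβ, hsβ, -⟩ := c.mem_TS.1 hβ
  have hrγ := c.simple_mem hγ
  have hne : β ≠ γ := by
    intro he
    have h1 := c.TS_inner_theta hβ
    rw [he, hγθ] at h1
    linarith [c.ha]
  have hle : ⟪β, β⟫ ≤ ⟪γ, γ⟫ := by rw [hsβ]; exact c.short_le hrγ
  obtain ⟨hm, hnorm⟩ := c.key hrβ hrγ hpos hne hle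
  have hcoeff := c.coeff_sub hrβ hrγ hm
  have hp2 : IsPos c.Δ c.coeff (β - γ) := by
    rcases c.sign_dichotomy hm with hp | hn
    · exact hp
    · exfalso
      have hz : ∀ γ' ∈ c.Δ, γ' ≠ γ → c.coeff β γ' = 0 := by
        intro γ' hγ' hne'
        have h3 := hn γ' hγ'
        rw [hcoeff γ' hγ', c.coeff_simple hγ γ' hγ', if_neg hne'] at h3
        have h4 := hpβ γ' hγ'
        omega
      have hβγ : β = (c.coeff β γ : ℝ) • γ := by
        conv_lhs => rw [c.repr hrβ]
        exact Finset.sum_eq_single_of_mem γ hγ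
          (fun γ' hγ' hne' => by rw [hz γ' hγ' hne']; simp)
      rcases c.R.reduced γ hrγ _ (hβγ ▸ hrβ) with h1 | h1
      · exact hne (by rw [hβγ, h1, one_smul])
      · have h2 := c.TS_inner_theta hβ
        rw [hβγ, h1, neg_smul, one_smul, inner_neg_left, hγθ] at h2
        linarith [c.ha]
  refine ⟨c.mem_TS.2 ⟨hm, hp2, by rw [hnorm, hsβ], ?_⟩, ?_⟩
  · rw [inner_sub_left, c.TS_inner_theta hβ, hγθ]
    linarith [c.ha]
  · rw [c.htZ_sub hrβ hrγ hm, c.htZ_simple hγ]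

lemma support {μ : E} (hm : μ ∈ c.R.roots) (hp : IsPos c.Δ c.coeff μ)
    (hperp : ⟪μ, c.θ⟫ = 0) :
    ∃ γ ∈ c.Δ, 0 < ⟪μ, γ⟫ ∧ ⟪γ, c.θ⟫ = 0 := by
  have h1 : ∑ γ ∈ c.Δ, (c.coeff μ γ : ℝ) * ⟪μ, γ⟫ = ⟪μ, μ⟫ := by
    calc ∑ γ ∈ c.Δ, (c.coeff μ γ : ℝ) * ⟪μ, γ⟫
        = ∑ γ ∈ c.Δ, ⟪μ, (c.coeff μ γ : ℝ) • γ⟫ :=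
          Finset.sum_congr rfl fun γ _ => (real_inner_smul_right μ γ _).symm
      _ = ⟪μ, ∑ γ ∈ c.Δ, (c.coeff μ γ : ℝ) • γ⟫ := (inner_sum _ _ _).symm
      _ = ⟪μ, μ⟫ := by rw [← c.repr hm]
  have h2 : ∑ γ ∈ c.Δ, (c.coeff μ γ : ℝ) * ⟪γ, c.θ⟫ = 0 := by
    calc ∑ γ ∈ c.Δ, (c.coeff μ γ : ℝ) * ⟪γ, c.θ⟫
        = ∑ γ ∈ c.Δ, ⟪(c.coeff μ γ : ℝ) • γ, c.θ⟫ :=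
          Finset.sum_congr rfl fun γ _ => (real_inner_smul_left γ c.θ _).symm
      _ = ⟪∑ γ ∈ c.Δ, (c.coeff μ γ : ℝ) • γ, c.θ⟫ := (sum_inner _ _ _).symm
      _ = 0 := by rw [← c.repr hm]; exact hperp
  have hterms : ∀ γ ∈ c.Δ, 0 ≤ (c.coeff μ γ : ℝ) * ⟪γ, c.θ⟫ := fun γ hγ =>
    mul_nonneg (by exact_mod_cast hp γ hγ)
      (c.inner_theta_nonneg (c.simple_mem hγ) (c.simple_isPos hγ))
  have hzero := (Finset.sum_eq_zero_iff_of_nonneg hterms).1 h2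
  have hppos : 0 < ⟪μ, μ⟫ := c.ipos hm
  have hex : ∃ γ ∈ c.Δ, 0 < (c.coeff μ γ : ℝ) * ⟪μ, γ⟫ := by
    by_contra hc
    push_neg at hc
    have := Finset.sum_nonpos hc
    linarith [h1 ▸ hppos]
  obtain ⟨γ, hγ, hprod⟩ := hex
  have hc0 : 0 ≤ (c.coeff μ γ : ℝ) := by exact_mod_cast hp γ hγ
  refine ⟨γ, hγ, ?_, ?_⟩
  · by_contra hcon
    push_neg at hcon
    nlinarith
  · have hcne : (c.coeff μ γ : ℝ) ≠ 0 := by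
      intro h0
      rw [h0] at hprod
      simp at hprod
    rcases mul_eq_zero.1 (hzero γ hγ) with h' | h'
    · exact absurd h' hcne
    · exact h'

lemma interval : ∀ n : ℕ, ∀ α β : E, α ∈ c.TS → β ∈ c.TS →
    htZ c.Δ c.coeff β - htZ c.Δ c.coeff α ≤ n →
    ∀ k : ℤ, htZ c.Δ c.coeff α ≤ k → k ≤ htZ c.Δ c.coeff β →
    ∃ δ ∈ c.TS, htZ c.Δ c.coeff δ = k := by
  intro n
  induction n with
  | zero =>
    intro α β hα hβ hd k h1 h2
    exact ⟨α, hα, by omega⟩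
  | succ n ih =>
    intro α β hα hβ hd k h1 h2
    by_cases hkα : k = htZ c.Δ c.coeff α
    · exact ⟨α, hα, hkα.symm⟩
    by_cases hkβ : k = htZ c.Δ c.coeff β
    · exact ⟨β, hβ, hkβ.symm⟩
    have hlt1 : htZ c.Δ c.coeff α < k := by omega
    have hlt2 : k < htZ c.Δ c.coeff β := by omega
    obtain ⟨hrα, hpα, hsα, -⟩ := c.mem_TS.1 hα
    obtain ⟨hrβ, hpβ, hsβ, -⟩ := c.mem_TS.1 hβ
    have hne : α ≠ β := fun he => by rw [he] at hlt1; omega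
    rcases c.TS_dichotomy hα hβ with hip | hsum
    · have hip' : 0 < ⟪β, α⟫ := by rwa [real_inner_comm α β]
      obtain ⟨hm, -⟩ := c.key hrβ hrα hip' (fun he => hne he.symm) (by rw [hsα, hsβ])
      have hhz := c.htZ_sub hrβ hrα hm
      have hp0 : IsPos c.Δ c.coeff (β - α) := (c.isPos_iff hm).2 (by omega)
      have hperp : ⟪β - α, c.θ⟫ = 0 := by
        rw [inner_sub_left, c.TS_inner_theta hα, c.TS_inner_theta hβ]
        ring
      obtain ⟨γ, hγ, hinner, hγθ⟩ := c.support hm hp0 hperp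
      rw [inner_sub_left] at hinner
      by_cases hβγ : 0 < ⟪β, γ⟫
      · obtain ⟨hβ', hht'⟩ := c.down_step hβ hγ hγθ hβγ
        exact ih α (β - γ) hα hβ' (by omega) k h1 (by omega)
      · push_neg at hβγ
        have hαγ : ⟪α, γ⟫ < 0 := by linarith
        obtain ⟨hα', hht'⟩ := c.up_step hα hγ hγθ hαγ
        exact ih (α + γ) β hα' hβ (by omega) k (by omega) h2
    · have hroot := c.R.reflect_mem α hrα c.θ c.hθmem
      have hia := c.TS_inner_theta hα
      have hsc : 2 * ⟪c.θ, α⟫ / ⟪α, α⟫ = (2 : ℝ) := by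
        rw [real_inner_comm α c.θ, hia, hsα]
        have := c.ha
        field_simp
      rw [hsc] at hroot
      have hba : c.θ - (2 : ℝ) • α = β - α := by rw [← hsum, two_smul]; abel
      rw [hba] at hroot
      have hhz := c.htZ_sub hrβ hrα hroot
      have hp0 : IsPos c.Δ c.coeff (β - α) := (c.isPos_iff hroot).2 (by omega)
      have hperp : ⟪β - α, c.θ⟫ = 0 := by
        rw [inner_sub_left, c.TS_inner_theta hα, c.TS_inner_theta hβ]
        ring
      obtain ⟨γ, hγ, hinner, hγθ⟩ := c.support hroot hp0 hperp
      have hβγ : 0 < ⟪β, γ⟫ := by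
        have hαγ : ⟪α, γ⟫ = - ⟪β, γ⟫ := by
          rw [show α = c.θ - β from by rw [← hsum]; abel, inner_sub_left,
            show ⟪c.θ, γ⟫ = 0 from by rw [real_inner_comm γ c.θ]; exact hγθ]
          ring
        rw [inner_sub_left, hαγ] at hinner
        linarith
      obtain ⟨hβ', hht'⟩ := c.down_step hβ hγ hγθ hβγ
      exact ih α (β - γ) hα hβ' (by omega) k h1 (by omega)

def PS : Finset E := c.R.roots.filter (fun α => IsPos c.Δ c.coeff α ∧ ⟪α, α⟫ = c.a)

lemma mem_PS {x : E} :
    x ∈ c.PS ↔ x ∈ c.R.roots ∧ IsPos c.Δ c.coeff x ∧ ⟪x, x⟫ = c.a := by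
  unfold PS
  rw [Finset.mem_filter]

lemma refl_mem {γ x : E} (hγ : γ ∈ c.R.roots) (hx : x ∈ c.R.roots) :
    reflMap γ x ∈ c.R.roots :=
  c.R.reflect_mem γ hγ x hx

lemma refl_norm {γ : E} (hγ : γ ∈ c.R.roots) (x : E) :
    ⟪reflMap γ x, reflMap γ x⟫ = ⟪x, x⟫ := by
  have hγγ : ⟪γ, γ⟫ ≠ 0 := ne_of_gt (c.ipos hγ)
  unfold reflMap pairR
  simp only [inner_sub_left, inner_sub_right, real_inner_smul_left, real_inner_smul_right]
  rw [real_inner_comm x γ]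
  field_simp
  ring

lemma refl_inner {γ : E} (hγ : γ ∈ c.R.roots) (x : E) :
    ⟪reflMap γ x, γ⟫ = - ⟪x, γ⟫ := by
  have hγγ : ⟪γ, γ⟫ ≠ 0 := ne_of_gt (c.ipos hγ)
  unfold reflMap pairR
  simp only [inner_sub_left, real_inner_smul_left]
  field_simp
  ring

lemma refl_invol {γ : E} (hγ : γ ∈ c.R.roots) (x : E) :
    reflMap γ (reflMap γ x) = x := by
  have hγγ : ⟪γ, γ⟫ ≠ 0 := ne_of_gt (c.ipos hγ)
  unfold reflMap pairR
  rw [show 2 * ⟪x - (2 * ⟪x, γ⟫ / ⟪γ, γ⟫) • γ, γ⟫ / ⟪γ, γ⟫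
      = -(2 * ⟪x, γ⟫ / ⟪γ, γ⟫) from by
    rw [inner_sub_left, real_inner_smul_left]
    field_simp
    ring]
  rw [neg_smul, sub_neg_eq_add]
  abel

lemma refl_gamma {γ : E} (hγ : γ ∈ c.R.roots) : reflMap γ γ = -γ := by
  have hγγ : ⟪γ, γ⟫ ≠ 0 := ne_of_gt (c.ipos hγ)
  unfold reflMap pairR
  rw [show 2 * ⟪γ, γ⟫ / ⟪γ, γ⟫ = (2 : ℝ) from by field_simp, two_smul]
  abel

lemma coeff_refl {γ x : E} (hγ : γ ∈ c.Δ) (hx : x ∈ c.R.roots) {q : ℤ}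
    (hq : 2 * ⟪x, γ⟫ / ⟪γ, γ⟫ = (q : ℝ)) :
    ∀ γ' ∈ c.Δ, c.coeff (reflMap γ x) γ' = c.coeff x γ' - (if γ' = γ then q else 0) := by
  apply c.coeff_eq (c.refl_mem (c.simple_mem hγ) hx)
  show x - pairR x γ • γ = _
  rw [show pairR x γ = (q : ℝ) from hq]
  conv_lhs => rw [c.repr hx, c.smul_simple_repr hγ q]
  rw [← Finset.sum_sub_distrib]
  refine Finset.sum_congr rfl fun γ' _ => ?_
  split <;> push_cast <;> rw [sub_smul] <;> simp

lemma refl_isPos {γ x : E} (hγ : γ ∈ c.Δ) (hx : x ∈ c.R.roots)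
    (hp : IsPos c.Δ c.coeff x) (hne : x ≠ γ) : IsPos c.Δ c.coeff (reflMap γ x) := by
  have hrγ := c.simple_mem hγ
  obtain ⟨q, hq⟩ := c.R.pairing_int γ hrγ x hx
  have hcoeff := c.coeff_refl hγ hx hq
  have hmem := c.refl_mem hrγ hx
  rcases c.sign_dichotomy hmem with hp' | hn
  · exact hp'
  · exfalso
    have hz : ∀ γ' ∈ c.Δ, γ' ≠ γ → c.coeff x γ' = 0 := by
      intro γ' hγ' hne'
      have h3 := hn γ' hγ'
      rw [hcoeff γ' hγ', if_neg hne'] at h3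
      have h4 := hp γ' hγ'
      omega
    have hxγ : x = (c.coeff x γ : ℝ) • γ := by
      conv_lhs => rw [c.repr hx]
      exact Finset.sum_eq_single_of_mem γ hγ
        (fun γ' hγ' hne' => by rw [hz γ' hγ' hne']; simp)
    rcases c.R.reduced γ hrγ _ (hxγ ▸ hx) with h1 | h1
    · exact hne (by rw [hxγ, h1, one_smul])
    · have h2 := hp γ hγ
      have h3 : (c.coeff x γ : ℝ) = -1 := h1
      have h4 : c.coeff x γ = -1 := by exact_mod_cast h3
      omega

lemma refl_mem_PS {γ x : E} (hγ : γ ∈ c.Δ) (hx : x ∈ c.PS) (hne : x ≠ γ) :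
    reflMap γ x ∈ c.PS := by
  obtain ⟨hr, hp, hs⟩ := c.mem_PS.1 hx
  exact c.mem_PS.2 ⟨c.refl_mem (c.simple_mem hγ) hr, c.refl_isPos hγ hr hp hne,
    by rw [c.refl_norm (c.simple_mem hγ), hs]⟩

lemma sum_inner_gamma_long {γ : E} (hγ : γ ∈ c.Δ) (hlong : ⟪γ, γ⟫ = 2 * c.a) :
    ∑ x ∈ c.PS, ⟪x, γ⟫ = 0 := by
  have hrγ := c.simple_mem hγ
  apply Finset.sum_involution (fun x _ => reflMap γ x)
  · intro x _
    rw [c.refl_inner hrγ]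
    ring
  · intro x _ hfx heq
    apply hfx
    have h := c.refl_inner hrγ x
    rw [heq] at h
    linarith
  · intro x hx
    apply c.refl_mem_PS hγ hx
    intro he
    obtain ⟨-, -, hs⟩ := c.mem_PS.1 hx
    rw [he, hlong] at hs
    linarith [c.ha]
  · intro x _
    exact c.refl_invol hrγ x

lemma sum_inner_gamma_short {γ : E} (hγ : γ ∈ c.Δ) (hshort : ⟪γ, γ⟫ = c.a) :
    ∑ x ∈ c.PS, ⟪x, γ⟫ = c.a := by
  have hrγ := c.simple_mem hγ
  have hγPS : γ ∈ c.PS := c.mem_PS.2 ⟨hrγ, c.simple_isPos hγ, hshort⟩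
  rw [← Finset.add_sum_erase _ _ hγPS, hshort]
  have hzero : ∑ x ∈ c.PS.erase γ, ⟪x, γ⟫ = 0 := by
    apply Finset.sum_involution (fun x _ => reflMap γ x)
    · intro x _
      rw [c.refl_inner hrγ]
      ring
    · intro x _ hfx heq
      apply hfx
      have h := c.refl_inner hrγ x
      rw [heq] at h
      linarith
    · intro x hx
      have hxPS := Finset.mem_of_mem_erase hx
      have hxne := Finset.ne_of_mem_erase hx
      apply Finset.mem_erase.2
      refine ⟨?_, c.refl_mem_PS hγ hxPS hxne⟩
      intro he
      have hx2 : x = -γ := by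
        have h4 := c.refl_invol hrγ x
        rw [he, c.refl_gamma hrγ] at h4
        exact h4.symm
      obtain ⟨hr, hp, -⟩ := c.mem_PS.1 hxPS
      have h1 := hp γ hγ
      rw [hx2, c.coeff_neg hrγ γ hγ, c.coeff_simple hγ γ hγ, if_pos rfl] at h1
      omega
    · intro x _
      exact c.refl_invol hrγ x
  rw [hzero, add_zero]

lemma sum_PS_theta_1 :
    ∑ x ∈ c.PS, ⟪x, c.θ⟫ = (c.TS.card : ℝ) * c.a := by
  have h1 : ∀ x ∈ c.PS, ⟪x, c.θ⟫ = if 0 < ⟪x, c.θ⟫ then c.a else 0 := by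
    intro x hx
    obtain ⟨hr, hp, hs⟩ := c.mem_PS.1 hx
    rcases c.inner_theta_short hr hp hs with h0 | h0
    · rw [h0, if_neg (lt_irrefl 0)]
    · rw [h0, if_pos c.ha]
  rw [Finset.sum_congr rfl h1, ← Finset.sum_filter, Finset.sum_const]
  have heq : c.PS.filter (fun x => 0 < ⟪x, c.θ⟫) = c.TS := by
    unfold PS TS
    rw [Finset.filter_filter]
    apply Finset.filter_congr
    intro x _
    simp [and_assoc]
  rw [heq]
  simp [nsmul_eq_mul]

lemma sum_PS_theta_2 :
    ∑ x ∈ c.PS, ⟪x, c.θ⟫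
      = c.a * ((htP c.Δ c.coeff (fun γ => ⟪γ, γ⟫ = c.a) c.θ : ℤ) : ℝ) := by
  have h1 : ∀ x ∈ c.PS, ⟪x, c.θ⟫ = ∑ γ ∈ c.Δ, (c.coeff c.θ γ : ℝ) * ⟪x, γ⟫ := by
    intro x _
    calc ⟪x, c.θ⟫ = ⟪x, ∑ γ ∈ c.Δ, (c.coeff c.θ γ : ℝ) • γ⟫ := by rw [← c.repr c.hθmem]
      _ = ∑ γ ∈ c.Δ, ⟪x, (c.coeff c.θ γ : ℝ) • γ⟫ := inner_sum _ _ _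
      _ = ∑ γ ∈ c.Δ, (c.coeff c.θ γ : ℝ) * ⟪x, γ⟫ :=
          Finset.sum_congr rfl fun γ _ => real_inner_smul_right _ _ _
  rw [Finset.sum_congr rfl h1, Finset.sum_comm]
  have h2 : ∀ γ ∈ c.Δ, ∑ x ∈ c.PS, (c.coeff c.θ γ : ℝ) * ⟪x, γ⟫
      = (c.coeff c.θ γ : ℝ) * (if ⟪γ, γ⟫ = c.a then c.a else 0) := by
    intro γ hγ
    rw [← Finset.mul_sum]
    congr 1
    rcases c.hlen γ (c.simple_mem hγ) with hs | hl
    · rw [if_pos hs]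
      exact c.sum_inner_gamma_short hγ hs
    · rw [if_neg (by rw [hl]; intro h; have := c.ha; linarith)]
      exact c.sum_inner_gamma_long hγ hl
  rw [Finset.sum_congr rfl h2]
  unfold htP
  push_cast
  rw [Finset.sum_filter, Finset.mul_sum]
  refine Finset.sum_congr rfl fun γ _ => ?_
  split
  · ring
  · ring

lemma card_TS_eq :
    (c.TS.card : ℤ) = htP c.Δ c.coeff (fun γ => ⟪γ, γ⟫ = c.a) c.θ := by
  have h := c.sum_PS_theta_1.symm.trans c.sum_PS_theta_2
  have ha := c.ha
  have h2 : (c.TS.card : ℝ) = ((htP c.Δ c.coeff (fun γ => ⟪γ, γ⟫ = c.a) c.θ : ℤ) : ℝ) := by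
    have h3 : (c.TS.card : ℝ) * c.a
        = ((htP c.Δ c.coeff (fun γ => ⟪γ, γ⟫ = c.a) c.θ : ℤ) : ℝ) * c.a := by
      rw [h]; ring
    exact mul_right_cancel₀ (ne_of_gt ha) h3
  exact_mod_cast h2

lemma htZ_theta_split :
    htZ c.Δ c.coeff c.θ = htP c.Δ c.coeff (fun γ => ⟪γ, γ⟫ = 2 * c.a) c.θ
      + htP c.Δ c.coeff (fun γ => ⟪γ, γ⟫ = c.a) c.θ := by
  unfold htZ htP
  have hfeq : c.Δ.filter (fun γ => ¬ ⟪γ, γ⟫ = c.a) = c.Δ.filter (fun γ => ⟪γ, γ⟫ = 2 * c.a) := by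
    apply Finset.filter_congr
    intro γ hγ
    have hne : c.a ≠ 2 * c.a := by have := c.ha; linarith
    rcases c.hlen γ (c.simple_mem hγ) with hs | hl
    · rw [hs]
      simp [hne]
    · rw [hl]
      simp [Ne.symm hne]
  rw [← Finset.sum_filter_add_sum_filter_not c.Δ (fun γ => ⟪γ, γ⟫ = c.a) (c.coeff c.θ), hfeq]
  exact add_comm _ _

lemma final :
    ((c.TS.card : ℤ) = htP c.Δ c.coeff (fun γ => ⟪γ, γ⟫ = c.a) c.θ) ∧
    (∀ m : ℤ, 1 ≤ m → m ≤ htP c.Δ c.coeff (fun γ => ⟪γ, γ⟫ = c.a) c.θ →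
      ∃! β : E, β ∈ c.TS ∧
        2 * htZ c.Δ c.coeff β
          = (htP c.Δ c.coeff (fun γ => ⟪γ, γ⟫ = 2 * c.a) c.θ - 1) + 2 * m) := by
  refine ⟨c.card_TS_eq, ?_⟩
  intro m hm1 hm2
  have hcard := c.card_TS_eq
  have hnonempty : c.TS.Nonempty := by
    rw [← Finset.card_pos]
    have h0 : (0 : ℤ) < (c.TS.card : ℤ) := by omega
    exact_mod_cast h0
  obtain ⟨αm, hαm, hmin⟩ := Finset.exists_min_image c.TS (htZ c.Δ c.coeff) hnonempty
  obtain ⟨βm, hβm, hmax⟩ := Finset.exists_max_image c.TS (htZ c.Δ c.coeff) hnonempty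
  obtain ⟨hθα, hcoα⟩ := c.theta_sub hαm
  obtain ⟨hθβ, hcoβ⟩ := c.theta_sub hβm
  have hhtθα : htZ c.Δ c.coeff (c.θ - αm)
      = htZ c.Δ c.coeff c.θ - htZ c.Δ c.coeff αm := by
    unfold htZ
    rw [Finset.sum_congr rfl hcoα, Finset.sum_sub_distrib]
  have hhtθβ : htZ c.Δ c.coeff (c.θ - βm)
      = htZ c.Δ c.coeff c.θ - htZ c.Δ c.coeff βm := by
    unfold htZ
    rw [Finset.sum_congr rfl hcoβ, Finset.sum_sub_distrib]
  have e1 : htZ c.Δ c.coeff c.θ - htZ c.Δ c.coeff αm ≤ htZ c.Δ c.coeff βm := by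
    have := hmax _ hθα
    omega
  have e2 : htZ c.Δ c.coeff αm ≤ htZ c.Δ c.coeff c.θ - htZ c.Δ c.coeff βm := by
    have := hmin _ hθβ
    omega
  have hsplit := c.htZ_theta_split
  have hinj : Set.InjOn (htZ c.Δ c.coeff) (c.TS : Set E) :=
    fun x hx y hy hxy => c.ht_inj (Finset.mem_coe.1 hx) (Finset.mem_coe.1 hy) hxy
  have h12 : htZ c.Δ c.coeff αm ≤ htZ c.Δ c.coeff βm := hmin βm hβm
  have himg : c.TS.image (htZ c.Δ c.coeff)
      = Finset.Icc (htZ c.Δ c.coeff αm) (htZ c.Δ c.coeff βm) := by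
    apply Finset.Subset.antisymm
    · intro k hk
      obtain ⟨δ, hδ, rfl⟩ := Finset.mem_image.1 hk
      exact Finset.mem_Icc.2 ⟨hmin δ hδ, hmax δ hδ⟩
    · intro k hk
      obtain ⟨hk1, hk2⟩ := Finset.mem_Icc.1 hk
      obtain ⟨δ, hδ, hδk⟩ := c.interval
        (htZ c.Δ c.coeff βm - htZ c.Δ c.coeff αm).toNat αm βm hαm hβm
        (by omega) k hk1 hk2
      exact Finset.mem_image.2 ⟨δ, hδ, hδk⟩
  have hcardIcc : (c.TS.card : ℤ)
      = htZ c.Δ c.coeff βm - htZ c.Δ c.coeff αm + 1 := by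
    have h3 := Finset.card_image_of_injOn hinj
    rw [himg, Int.card_Icc] at h3
    omega
  have hE2 : 2 * htZ c.Δ c.coeff αm
      = htP c.Δ c.coeff (fun γ => ⟪γ, γ⟫ = 2 * c.a) c.θ + 1 := by
    omega
  have hk : htZ c.Δ c.coeff αm + m - 1
      ∈ Finset.Icc (htZ c.Δ c.coeff αm) (htZ c.Δ c.coeff βm) :=
    Finset.mem_Icc.2 ⟨by omega, by omega⟩
  rw [← himg] at hk
  obtain ⟨δ, hδ, hδk⟩ := Finset.mem_image.1 hk
  refine ⟨δ, ⟨hδ, by omega⟩, ?_⟩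
  rintro y ⟨hy, hyht⟩
  exact c.ht_inj hy hδ (by omega)

end Ctx
end Stmt10Aux

/-- with `Λ = 2` (or simply laced), `L = ht_l(θ)`, `S = ht_s(θ)`: the
positive short roots `α` with `(α, θ∨) > 0` are exactly `S` in number, and for each
`m = 1, …, S` there is a unique such root of height `(L−1)/2 + m`
(stated as `2·ht(β) = (L − 1) + 2m`). -/
theorem stmt10 (R : RRS E) (Δ : Finset E) (coeff : E → E → ℤ) (hB : IsBase R Δ coeff)
    (a : ℝ) (ha : 0 < a)
    (hlen : ∀ α ∈ R.roots, ⟪α, α⟫ = a ∨ ⟪α, α⟫ = 2 * a)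
    (θ : E) (hθmem : θ ∈ R.roots)
    (hθhigh : ∀ α ∈ R.roots, ∀ γ ∈ Δ, coeff α γ ≤ coeff θ γ)
    (hθlong : ⟪θ, θ⟫ = 2 * a) :
    (((R.roots.filter (fun α => IsPos Δ coeff α ∧ ⟪α, α⟫ = a ∧ 0 < ⟪α, θ⟫)).card : ℤ)
        = htP Δ coeff (fun γ => ⟪γ, γ⟫ = a) θ) ∧
    (∀ m : ℤ, 1 ≤ m → m ≤ htP Δ coeff (fun γ => ⟪γ, γ⟫ = a) θ →
      ∃! β : E,
        β ∈ R.roots.filter (fun α => IsPos Δ coeff α ∧ ⟪α, α⟫ = a ∧ 0 < ⟪α, θ⟫) ∧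
        2 * htZ Δ coeff β = (htP Δ coeff (fun γ => ⟪γ, γ⟫ = 2 * a) θ - 1) + 2 * m) :=
  Stmt10Aux.Ctx.final ⟨R, Δ, coeff, hB, a, ha, hlen, θ, hθmem, hθhigh, hθlong⟩

end
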